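/- arXiv:math/9911022 — 2 statements merged into one kernel-verified Lean document; each statement's English description precedes it below -/
import Mathlib

section
/- Let Σ₁ and Σ₂ be finite complete simplicial fans in a free abelian group N of finite rank. Then Σ₁ and Σ₂ are combinatorially equivalent (i.e., there exists a bijection ψ : G(Σ₁) → G(Σ₂) such that for every nonempty subset S ⊆ G(Σ₁) one has Cone(S) ∈ Σ₁ if and only if Cone(ψ(S)) ∈ Σ₂) if and only if PC(Σ₁) and PC(Σ₂) are isomorphic, i.e., there exists a bijection φ : G(Σ₁) → G(Σ₂) such that P ↦ φ(P) is a well-defined bijection from PC(Σ₁) onto PC(Σ₂). -/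
noncomputable section

open Finset

/-- The real vector space `N_ℝ` for the lattice `N = ℤ^d`. -/
abbrev NR (d : ℕ) := Fin d → ℝ

/-- The canonical map from the lattice `N = ℤ^d` to `N_ℝ`. -/
def toNR {d : ℕ} (x : Fin d → ℤ) : NR d := fun i => (x i : ℝ)

/-- The convex cone generated by a set: all finite nonnegative real combinations. -/
def coneOf {d : ℕ} (S : Set (NR d)) : Set (NR d) :=
  { y | ∃ (n : ℕ) (c : Fin n → ℝ) (v : Fin n → NR d),
      (∀ i, 0 ≤ c i) ∧ (∀ i, v i ∈ S) ∧ y = ∑ i, c i • v i }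

/-- `τ` is a face of the cone `σ`, cut out by a linear functional nonnegative on `σ`. -/
def IsFaceOf {d : ℕ} (τ σ : Set (NR d)) : Prop :=
  ∃ u : NR d →ₗ[ℝ] ℝ, (∀ x ∈ σ, 0 ≤ u x) ∧ τ = {x ∈ σ | u x = 0}

/-- A rational polyhedral cone: generated by finitely many lattice points. -/
def IsRationalPolyhedralCone {d : ℕ} (σ : Set (NR d)) : Prop :=
  ∃ S : Finset (Fin d → ℤ), σ = coneOf (toNR '' (↑S : Set (Fin d → ℤ)))

/-- A pointed (strongly convex) cone. -/
def IsPointedCone {d : ℕ} (σ : Set (NR d)) : Prop :=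
  ∀ x ∈ σ, -x ∈ σ → x = 0

/-- A primitive lattice vector. -/
def IsPrimitive {d : ℕ} (x : Fin d → ℤ) : Prop :=
  x ≠ 0 ∧ ∀ (k : ℤ) (y : Fin d → ℤ), x = k • y → k = 1 ∨ k = -1

/-- The dimension of a cone. -/
def coneDim {d : ℕ} (σ : Set (NR d)) : ℕ :=
  Module.finrank ℝ ↥(Submodule.span ℝ σ)

/-- A (finite) fan in `N = ℤ^d`: a finite collection of rational pointed polyhedral
cones, closed under taking faces, such that the intersection of any two cones is a
face of each. -/
structure Fan (d : ℕ) where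
  cones : Set (Set (NR d))
  finite : cones.Finite
  rational : ∀ σ ∈ cones, IsRationalPolyhedralCone σ
  pointed : ∀ σ ∈ cones, IsPointedCone σ
  face_mem : ∀ σ ∈ cones, ∀ τ : Set (NR d), IsFaceOf τ σ → τ ∈ cones
  inter_face : ∀ σ ∈ cones, ∀ τ ∈ cones, IsFaceOf (σ ∩ τ) σ

namespace Fan

variable {d : ℕ}

/-- A complete fan. -/
def IsComplete (F : Fan d) : Prop := ⋃₀ F.cones = Set.univ

/-- A simplicial fan: every cone is generated by linearly independent vectors. -/
def IsSimplicial (F : Fan d) : Prop :=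
  ∀ σ ∈ F.cones, ∃ S : Finset (Fin d → ℤ),
    LinearIndependent ℝ (fun v : ↥(toNR '' (↑S : Set (Fin d → ℤ))) => (v : NR d)) ∧
    σ = coneOf (toNR '' (↑S : Set (Fin d → ℤ)))

/-- A nonsingular fan: every cone is generated by part of a `ℤ`-basis of `N`. -/
def IsNonsingular (F : Fan d) : Prop :=
  ∀ σ ∈ F.cones, ∃ (b : Module.Basis (Fin d) ℤ (Fin d → ℤ)) (t : Set (Fin d)),
    σ = coneOf (toNR '' (⇑b '' t))

/-- `G(Σ)`: the set of primitive generators of the rays of a fan. -/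
def genSet (F : Fan d) : Set (Fin d → ℤ) :=
  { x | IsPrimitive x ∧ coneOf {toNR x} ∈ F.cones }

/-- `G(σ) = σ ∩ G(Σ)`. -/
def coneGens (F : Fan d) (σ : Set (NR d)) : Set (Fin d → ℤ) :=
  { x ∈ F.genSet | toNR x ∈ σ }

/-- A primitive collection of a fan. -/
def IsPrimitiveCollection (F : Fan d) (P : Finset (Fin d → ℤ)) : Prop :=
  P.Nonempty ∧ (↑P : Set (Fin d → ℤ)) ⊆ F.genSet ∧
    coneOf (toNR '' (↑P : Set (Fin d → ℤ))) ∉ F.cones ∧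
    ∀ x ∈ P, coneOf (toNR '' ((↑P : Set (Fin d → ℤ)) \ {x})) ∈ F.cones

/-- `IsPrimRel F P Y a`: `P` is a primitive collection of `F` whose primitive relation is
`∑_{x ∈ P} x = ∑_{y ∈ Y} (a y) • y`, where `Y = G(σ(P))` and `σ(P)` is the unique cone
whose relative interior contains `∑_{x ∈ P} x`, and the coefficients `a y` are positive. -/
def IsPrimRel (F : Fan d) (P Y : Finset (Fin d → ℤ)) (a : (Fin d → ℤ) → ℤ) : Prop :=
  F.IsPrimitiveCollection P ∧
  ∃ σ ∈ F.cones, (↑Y : Set (Fin d → ℤ)) = F.coneGens σ ∧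
    toNR (∑ x ∈ P, x) ∈ intrinsicInterior ℝ σ ∧
    (∀ y ∈ Y, 0 < a y) ∧ (∑ x ∈ P, x) = ∑ y ∈ Y, a y • y

/-- A Fano fan: a finite complete nonsingular fan with `deg P > 0` for every
primitive collection `P` (so its toric variety is a nonsingular toric Fano `d`-fold). -/
def IsFanoFan (F : Fan d) : Prop :=
  F.IsComplete ∧ F.IsNonsingular ∧
    ∀ P Y a, F.IsPrimRel P Y a → ∑ y ∈ Y, a y < (P.card : ℤ)

/-- The collection of cones of the star subdivision of `F` along `(σ, x)`. -/
def starSub (F : Fan d) (σ : Set (NR d)) (x : Fin d → ℤ) : Set (Set (NR d)) :=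
  { τ ∈ F.cones | ¬ IsFaceOf σ τ } ∪
  { ρ | ∃ τ ∈ F.cones, IsFaceOf σ τ ∧ ∃ xi ∈ F.coneGens σ,
      IsFaceOf ρ (coneOf (toNR ''
        (insert x ((F.coneGens τ \ F.coneGens σ) ∪ (F.coneGens σ \ {xi}))))) }

/-- `F'` is the star subdivision of `F` along `(σ, x)`. -/
def IsStarSubdivisionOf (F' F : Fan d) (σ : Set (NR d)) (x : Fin d → ℤ) : Prop :=
  F'.cones = F.starSub σ x

/-- `F'` is an equivariant blow-up of `F`: the star subdivision along a cone `σ` (with at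
least two generators) and the sum of the elements of `G(σ)`. -/
def IsBlowupOf (F' F : Fan d) : Prop :=
  ∃ σ ∈ F.cones, ∃ S : Finset (Fin d → ℤ),
    (↑S : Set (Fin d → ℤ)) = F.coneGens σ ∧ 2 ≤ S.card ∧
    F'.IsStarSubdivisionOf F σ (∑ y ∈ S, y)

/-- One step of F-equivalence: an equivariant blow-up or blow-down between Fano fans. -/
def FStep (F G : Fan d) : Prop :=
  F.IsFanoFan ∧ G.IsFanoFan ∧ (G.IsBlowupOf F ∨ F.IsBlowupOf G)

/-- F-equivalence of Fano fans. -/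
def FEquiv : Fan d → Fan d → Prop := Relation.ReflTransGen FStep

/-- A splitting fan: any two distinct primitive collections are disjoint. -/
def IsSplittingFan (F : Fan d) : Prop :=
  F.IsComplete ∧ F.IsNonsingular ∧
    ∀ P Q, F.IsPrimitiveCollection P → F.IsPrimitiveCollection Q → P ≠ Q →
      ∀ x ∈ P, x ∉ Q

/-- Data of a wall relation: `τ` is a wall (a `(d-1)`-dimensional cone) with
`G(τ) = Z`, `z_d = zd`, `z_{d+1} = zd1` the generators of the two maximal cones
containing `τ`, and `∑_{z ∈ Z} (b z) • z + zd + zd1 = 0`.  The anticanonical degree of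
the corresponding invariant curve is `∑_{z ∈ Z} b z + 2`. -/
def IsWallRel (F : Fan d) (τ : Set (NR d)) (Z : Finset (Fin d → ℤ))
    (zd zd1 : Fin d → ℤ) (b : (Fin d → ℤ) → ℤ) : Prop :=
  τ ∈ F.cones ∧ coneDim τ = d - 1 ∧ (↑Z : Set (Fin d → ℤ)) = F.coneGens τ ∧
    zd ∈ F.genSet ∧ zd1 ∈ F.genSet ∧ zd ≠ zd1 ∧ zd ∉ Z ∧ zd1 ∉ Z ∧
    coneOf (toNR '' (insert zd (↑Z : Set (Fin d → ℤ)))) ∈ F.cones ∧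
    coneOf (toNR '' (insert zd1 (↑Z : Set (Fin d → ℤ)))) ∈ F.cones ∧
    (∑ z ∈ Z, b z • z) + zd + zd1 = 0

end Fan

/-- The fan of a product of projective spaces `P^{a 0} × ⋯ × P^{a (r-1)}`. -/
def IsProdProjFan {d r : ℕ} (F : Fan d) (a : Fin r → ℕ) : Prop :=
  ∃ e : (j : Fin r) → Fin (a j + 1) → (Fin d → ℤ),
    (∀ j, ∑ i, e j i = 0) ∧
    (∃ b : Module.Basis ((j : Fin r) × Fin (a j)) ℤ (Fin d → ℤ),
       ∀ (j : Fin r) (i : Fin (a j)), e j i.castSucc = b ⟨j, i⟩) ∧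
    F.cones = { σ | ∃ s : (j : Fin r) → Finset (Fin (a j + 1)),
        (∀ j, s j ≠ Finset.univ) ∧
        σ = coneOf (toNR '' (⋃ j, (e j) '' (↑(s j) : Set (Fin (a j + 1))))) }

/-- The fan of the projective space `P^d`. -/
def IsProjFan {d : ℕ} (F : Fan d) : Prop := IsProdProjFan F (fun _ : Fin 1 => d)

/-- The lattice points of `N_ℝ`. -/
def latticePts (d : ℕ) : Set (NR d) := Set.range (toNR (d := d))

/-- `F` is, up to a unimodular identification, the product of the fans `F₁` and `F₂`. -/
def IsProductOf {d d₁ d₂ : ℕ} (F : Fan d) (F₁ : Fan d₁) (F₂ : Fan d₂) : Prop :=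
  ∃ φ : NR d ≃ₗ[ℝ] NR d₁ × NR d₂,
    (⇑φ '' latticePts d = (latticePts d₁) ×ˢ (latticePts d₂)) ∧
    F.cones = { σ | ∃ σ₁ ∈ F₁.cones, ∃ σ₂ ∈ F₂.cones, ⇑φ '' σ = σ₁ ×ˢ σ₂ }

/-- `δ` is a nonempty proper face of the polytope `Δ`. -/
def IsProperPolytopeFace {d : ℕ} (δ Δ : Set (NR d)) : Prop :=
  δ.Nonempty ∧ δ ≠ Δ ∧ ∃ (u : NR d →ₗ[ℝ] ℝ) (c : ℝ),
    (∀ x ∈ Δ, u x ≤ c) ∧ δ = {x ∈ Δ | u x = c}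

/-- The collection of cones over the proper faces of the polytope `Conv(V)`
(together with the zero cone). -/
def polytopeFaceFan {d : ℕ} (V : Set (NR d)) : Set (Set (NR d)) :=
  insert ({0} : Set (NR d))
    { σ | ∃ δ : Set (NR d), IsProperPolytopeFace δ (convexHull ℝ V) ∧ σ = coneOf δ }

/-- The four-dimensional del Pezzo fan `V⁴` (up to unimodular equivalence). -/
def IsDelPezzoFan4 (F : Fan 4) : Prop :=
  ∃ b : Module.Basis (Fin 4) ℤ (Fin 4 → ℤ),
    F.cones = polytopeFaceFan (toNR ''
      ((Set.range ⇑b) ∪ (Set.range fun i => -b i) ∪ {(∑ i, b i), -(∑ i, b i)}))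

/-- The four-dimensional pseudo del Pezzo fan `Ṽ⁴` (up to unimodular equivalence). -/
def IsPseudoDelPezzoFan4 (F : Fan 4) : Prop :=
  ∃ b : Module.Basis (Fin 4) ℤ (Fin 4 → ℤ),
    F.cones = polytopeFaceFan (toNR ''
      ((Set.range ⇑b) ∪ (Set.range fun i => -b i) ∪ {∑ i, b i}))

/-- An equivariant blow-up of a 3-dimensional fan at an invariant point: star subdivision
along a 3-dimensional cone and the sum of its three generators. -/
def PointBlowup3 (F' F : Fan 3) : Prop :=
  ∃ σ ∈ F.cones, ∃ S : Finset (Fin 3 → ℤ),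
    (↑S : Set (Fin 3 → ℤ)) = F.coneGens σ ∧ S.card = 3 ∧
    F'.IsStarSubdivisionOf F σ (∑ y ∈ S, y)

/-- An equivariant blow-up of a 3-dimensional fan along an invariant curve: star
subdivision along a 2-dimensional cone and the sum of its two generators. -/
def CurveBlowup3 (F' F : Fan 3) : Prop :=
  ∃ σ ∈ F.cones, ∃ S : Finset (Fin 3 → ℤ),
    (↑S : Set (Fin 3 → ℤ)) = F.coneGens σ ∧ S.card = 2 ∧
    F'.IsStarSubdivisionOf F σ (∑ y ∈ S, y)

namespace Aux

variable {d : ℕ}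

theorem mem_coneOf_self {S : Set (NR d)} {v : NR d} (hv : v ∈ S) : v ∈ coneOf S :=
  ⟨1, fun _ => 1, fun _ => v, fun _ => zero_le_one, fun _ => hv, by simp⟩

theorem zero_mem_coneOf (S : Set (NR d)) : (0 : NR d) ∈ coneOf S :=
  ⟨0, fun i => i.elim0, fun i => i.elim0, fun i => i.elim0, fun i => i.elim0, by simp⟩

theorem coneOf_mono {S T : Set (NR d)} (h : S ⊆ T) : coneOf S ⊆ coneOf T := by
  rintro y ⟨n, c, v, hc, hv, rfl⟩
  exact ⟨n, c, v, hc, fun i => h (hv i), rfl⟩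

theorem smul_mem_coneOf {S : Set (NR d)} {y : NR d} (hy : y ∈ coneOf S) {a : ℝ} (ha : 0 ≤ a) :
    a • y ∈ coneOf S := by
  obtain ⟨n, c, v, hc, hv, rfl⟩ := hy
  exact ⟨n, fun i => a * c i, v, fun i => mul_nonneg ha (hc i), hv, by
    rw [Finset.smul_sum]; simp [smul_smul]⟩

theorem add_mem_coneOf {S : Set (NR d)} {y z : NR d} (hy : y ∈ coneOf S) (hz : z ∈ coneOf S) :
    y + z ∈ coneOf S := by
  obtain ⟨n, c, v, hc, hv, rfl⟩ := hy
  obtain ⟨m, b, w, hb, hw, rfl⟩ := hz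
  refine ⟨n + m, Fin.append c b, Fin.append v w, ?_, ?_, ?_⟩
  · intro i
    refine Fin.addCases (fun j => ?_) (fun j => ?_) i
    · simpa using hc j
    · simpa using hb j
  · intro i
    refine Fin.addCases (fun j => ?_) (fun j => ?_) i
    · simpa using hv j
    · simpa using hw j
  · rw [Fin.sum_univ_add]
    congr 1 <;> exact Finset.sum_congr rfl fun i _ => by simp

theorem sum_mem_coneOf {S : Set (NR d)} {ι : Type*} (t : Finset ι) (g : ι → NR d)
    (hg : ∀ i ∈ t, g i ∈ coneOf S) : ∑ i ∈ t, g i ∈ coneOf S := by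
  classical
  induction t using Finset.induction_on with
  | empty => simpa using zero_mem_coneOf S
  | insert _ _ hx ih =>
    rw [Finset.sum_insert hx]
    exact add_mem_coneOf (hg _ (Finset.mem_insert_self _ _))
      (ih fun i hi => hg i (Finset.mem_insert_of_mem hi))

theorem coneOf_subset {S T : Set (NR d)} (h : S ⊆ coneOf T) : coneOf S ⊆ coneOf T := by
  rintro y ⟨n, c, v, hc, hv, rfl⟩
  exact sum_mem_coneOf _ _ fun i _ => smul_mem_coneOf (h (hv i)) (hc i)

theorem coneOf_empty_subset : coneOf (∅ : Set (NR d)) ⊆ {0} := by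
  rintro y ⟨n, c, v, hc, hv, rfl⟩
  haveI : IsEmpty (Fin n) := ⟨fun i => (hv i).elim⟩
  simp

theorem mem_coneOf_singleton {v y : NR d} :
    y ∈ coneOf {v} ↔ ∃ c : ℝ, 0 ≤ c ∧ y = c • v := by
  constructor
  · rintro ⟨n, c, w, hc, hw, rfl⟩
    refine ⟨∑ i, c i, Finset.sum_nonneg fun i _ => hc i, ?_⟩
    rw [Finset.sum_smul]
    exact Finset.sum_congr rfl fun i _ => by rw [hw i]
  · rintro ⟨c, hc, rfl⟩
    exact smul_mem_coneOf (mem_coneOf_self (Set.mem_singleton v)) hc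

theorem nonneg_on_coneOf {S : Set (NR d)} (u : NR d →ₗ[ℝ] ℝ) (hu : ∀ v ∈ S, 0 ≤ u v)
    {y : NR d} (hy : y ∈ coneOf S) : 0 ≤ u y := by
  obtain ⟨n, c, v, hc, hv, rfl⟩ := hy
  rw [map_sum]
  exact Finset.sum_nonneg fun i _ => by rw [map_smul]; exact mul_nonneg (hc i) (hu _ (hv i))

theorem face_eq_coneOf {S : Set (NR d)} (u : NR d →ₗ[ℝ] ℝ) (hu : ∀ v ∈ S, 0 ≤ u v) :
    {x ∈ coneOf S | u x = 0} = coneOf {v ∈ S | u v = 0} := by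
  ext y
  constructor
  · rintro ⟨⟨n, c, v, hc, hv, rfl⟩, hy0⟩
    have hterm : ∀ i, c i * u (v i) = 0 := by
      intro i
      refine (Finset.sum_eq_zero_iff_of_nonneg (fun i _ =>
        mul_nonneg (hc i) (hu _ (hv i)))).1 ?_ i (Finset.mem_univ i)
      rw [← hy0, map_sum]
      exact Finset.sum_congr rfl fun i _ => (map_smul u (c i) (v i)).symm
    have hci : ∀ i, u (v i) ≠ 0 → c i = 0 := fun i h =>
      (mul_eq_zero.1 (hterm i)).resolve_right h
    by_cases hZ : ∃ z, z ∈ S ∧ u z = 0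
    · obtain ⟨z₀, hz₀S, hz₀u⟩ := hZ
      refine ⟨n, fun i => if u (v i) = 0 then c i else 0,
        fun i => if u (v i) = 0 then v i else z₀, fun i => ?_, fun i => ?_, ?_⟩
      · dsimp only; split
        · exact hc i
        · exact le_refl 0
      · dsimp only; split
        · exact ⟨hv i, by assumption⟩
        · exact ⟨hz₀S, hz₀u⟩
      · refine Finset.sum_congr rfl fun i _ => ?_
        dsimp only
        by_cases h : u (v i) = 0
        · simp [h]
        · simp [h, hci i h]
    · push_neg at hZ
      have hy' : ∑ i, c i • v i = 0 :=
        Finset.sum_eq_zero fun i _ => by rw [hci i (hZ _ (hv i)), zero_smul]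
      rw [hy']
      exact zero_mem_coneOf _
  · intro hy
    refine ⟨coneOf_mono (fun v hv => hv.1) hy, ?_⟩
    obtain ⟨n, c, v, hc, hv, rfl⟩ := hy
    rw [map_sum]
    refine Finset.sum_eq_zero fun i _ => ?_
    rw [map_smul, (hv i).2, smul_zero]

theorem toNR_ne_zero {x : Fin d → ℤ} (hx : x ≠ 0) : toNR x ≠ 0 := by
  intro h
  apply hx
  funext i
  have := congrFun h i
  simpa [toNR] using this

/-- Key geometric lemma: in a simplicial fan, if the cone on `S ⊆ G(Σ)` is in the fan,
then so is the cone on every subset of `S`. -/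
theorem subcone_mem (F : Fan d) (hs : F.IsSimplicial) (S : Finset (Fin d → ℤ))
    (hSg : ↑S ⊆ F.genSet) (hS : coneOf (toNR '' ↑S) ∈ F.cones)
    {T : Set (Fin d → ℤ)} (hT : T ⊆ ↑S) : coneOf (toNR '' T) ∈ F.cones := by
  classical
  obtain ⟨S', hli, hσ⟩ := hs _ hS
  set W : Set (NR d) := toNR '' ↑S' with hW
  have hray : ∀ x ∈ T, ∃ w ∈ W, ∃ μ : ℝ, 0 < μ ∧ toNR x = μ • w := by
    intro x hx
    have hxg : x ∈ F.genSet := hSg (hT hx)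
    have hxr : coneOf {toNR x} ∈ F.cones := hxg.2
    have hxσ : toNR x ∈ coneOf W := by
      rw [← hσ]; exact mem_coneOf_self ⟨x, hT hx, rfl⟩
    have hraysub : coneOf {toNR x} ⊆ coneOf (toNR '' ↑S) := by
      rw [hσ]
      intro y hy
      obtain ⟨c, hc, rfl⟩ := mem_coneOf_singleton.1 hy
      exact smul_mem_coneOf hxσ hc
    have hface := F.inter_face _ hS _ hxr
    rw [Set.inter_eq_self_of_subset_right hraysub] at hface
    obtain ⟨u, hu0, hueq⟩ := hface
    rw [hσ] at hu0 hueq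
    have hu0' : ∀ w ∈ W, 0 ≤ u w := fun w hw => hu0 w (mem_coneOf_self hw)
    rw [face_eq_coneOf u hu0'] at hueq
    have hxZ : toNR x ∈ coneOf {w ∈ W | u w = 0} := by
      rw [← hueq]; exact mem_coneOf_self (Set.mem_singleton _)
    have hxne : toNR x ≠ 0 := toNR_ne_zero hxg.1.1
    have hZne : {w ∈ W | u w = 0}.Nonempty := by
      by_contra h
      rw [Set.not_nonempty_iff_eq_empty] at h
      rw [h] at hxZ
      exact hxne (coneOf_empty_subset hxZ)
    obtain ⟨z₀, hz₀⟩ := hZne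
    have hz₀ray : z₀ ∈ coneOf {toNR x} := by
      rw [hueq]; exact mem_coneOf_self hz₀
    obtain ⟨c, hc, hz₀eq⟩ := mem_coneOf_singleton.1 hz₀ray
    have hz₀ne : z₀ ≠ 0 := by
      intro h
      exact hli.ne_zero ⟨z₀, hz₀.1⟩ (by simpa using h)
    have hc0 : c ≠ 0 := fun h => hz₀ne (by rw [hz₀eq, h, zero_smul])
    refine ⟨z₀, hz₀.1, c⁻¹, inv_pos.2 (lt_of_le_of_ne hc (Ne.symm hc0)), ?_⟩
    rw [hz₀eq, smul_smul, inv_mul_cancel₀ hc0, one_smul]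
  set A : Set (NR d) := {w ∈ W | ∃ x ∈ T, ∃ μ : ℝ, 0 < μ ∧ toNR x = μ • w} with hA
  have hAW : A ⊆ W := fun w hw => hw.1
  have hconeEq : coneOf (toNR '' T) = coneOf A := by
    apply Set.Subset.antisymm
    · apply coneOf_subset
      rintro _ ⟨x, hx, rfl⟩
      obtain ⟨w, hwW, μ, hμ, hxw⟩ := hray x hx
      rw [hxw]
      exact smul_mem_coneOf (mem_coneOf_self (show _ ∈ A from ⟨hwW, x, hx, μ, hμ, hxw⟩)) hμ.le
    · apply coneOf_subset
      rintro w ⟨hwW, x, hx, μ, hμ, hxw⟩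
      have hw' : w = μ⁻¹ • toNR x := by
        rw [hxw, smul_smul, inv_mul_cancel₀ hμ.ne', one_smul]
      rw [hw']
      exact smul_mem_coneOf (mem_coneOf_self (show toNR x ∈ toNR '' T from ⟨x, hx, rfl⟩)) (inv_pos.2 hμ).le
  let b := Module.Basis.extend hli
  let u : NR d →ₗ[ℝ] ℝ := b.constr ℝ (fun w => if (w : NR d) ∈ A then 0 else 1)
  have huW : ∀ w ∈ W, u w = if w ∈ A then (0 : ℝ) else 1 := by
    intro w hw
    have hw' : w ∈ (linearIndependent_subtype_iff.1 hli).extend (Set.subset_univ W) :=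
      (linearIndependent_subtype_iff.1 hli).subset_extend _ hw
    have hbw : b ⟨w, hw'⟩ = w := Module.Basis.extend_apply_self hli ⟨w, hw'⟩
    conv_lhs => rw [← hbw]
    rw [Module.Basis.constr_basis]
  have huWnn : ∀ w ∈ W, 0 ≤ u w := by
    intro w hw
    rw [huW w hw]
    split <;> norm_num
  have hu0 : ∀ y ∈ coneOf (toNR '' ↑S), 0 ≤ u y := by
    rw [hσ]
    intro y hy
    exact nonneg_on_coneOf u huWnn hy
  have hAset : {w ∈ W | u w = 0} = A := by
    ext w
    constructor
    · rintro ⟨hwW, hw0⟩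
      rw [huW w hwW] at hw0
      by_contra h
      rw [if_neg h] at hw0
      norm_num at hw0
    · intro hw
      exact ⟨hAW hw, by rw [huW w (hAW hw), if_pos hw]⟩
  have hfaceset : coneOf (toNR '' T) = {y ∈ coneOf (toNR '' ↑S) | u y = 0} := by
    rw [hσ, face_eq_coneOf u huWnn, hAset, hconeEq]
  exact F.face_mem _ hS _ ⟨u, hu0, hfaceset⟩

/-- Minimal-counterexample lemma: a non-cone subset of generators contains a
primitive collection. -/
theorem exists_pc (F : Fan d) :
    ∀ S : Finset (Fin d → ℤ), S.Nonempty → ↑S ⊆ F.genSet →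
      coneOf (toNR '' ↑S) ∉ F.cones → ∃ P, P ⊆ S ∧ F.IsPrimitiveCollection P := by
  intro S
  induction S using Finset.strongInductionOn with
  | _ S ih =>
  intro hne hsub hnot
  by_cases h : ∀ x ∈ S, coneOf (toNR '' ((↑S : Set (Fin d → ℤ)) \ {x})) ∈ F.cones
  · exact ⟨S, subset_rfl, hne, hsub, hnot, h⟩
  · push_neg at h
    obtain ⟨x, hx, hxc⟩ := h
    have hcard2 : 2 ≤ S.card := by
      by_contra hlt
      push_neg at hlt
      have h1 : S.card = 1 := by
        have := Finset.card_pos.2 hne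
        omega
      obtain ⟨y, rfl⟩ := Finset.card_eq_one.1 h1
      apply hnot
      have hy : y ∈ F.genSet := hsub (by simp)
      simpa using hy.2
    have hss : S.erase x ⊂ S := Finset.erase_ssubset hx
    have hne' : (S.erase x).Nonempty := by
      rw [← Finset.card_pos, Finset.card_erase_of_mem hx]
      omega
    have hxc' : coneOf (toNR '' ↑(S.erase x)) ∉ F.cones := by
      rwa [Finset.coe_erase]
    obtain ⟨P, hPs, hPC⟩ := ih _ hss hne'
      ((Finset.coe_subset.2 (Finset.erase_subset x S)).trans hsub) hxc'
    exact ⟨P, hPs.trans (Finset.erase_subset x S), hPC⟩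

theorem pc_card (F : Fan d) {P : Finset (Fin d → ℤ)} (h : F.IsPrimitiveCollection P) :
    2 ≤ P.card := by
  obtain ⟨hne, hsub, hnot, -⟩ := h
  by_contra hlt
  push_neg at hlt
  have h1 : P.card = 1 := by
    have := Finset.card_pos.2 hne
    omega
  obtain ⟨x, rfl⟩ := Finset.card_eq_one.1 h1
  apply hnot
  have hx : x ∈ F.genSet := hsub (by simp)
  simpa using hx.2

theorem cone_mem_iff (F : Fan d) (hs : F.IsSimplicial) (S : Finset (Fin d → ℤ))
    (hne : S.Nonempty) (hsub : ↑S ⊆ F.genSet) :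
    coneOf (toNR '' ↑S) ∈ F.cones ↔ ∀ P ⊆ S, ¬ F.IsPrimitiveCollection P := by
  constructor
  · intro h P hPS hPC
    exact hPC.2.2.1 (subcone_mem F hs S hsub h (Finset.coe_subset.2 hPS))
  · intro h
    by_contra hnot
    obtain ⟨P, hPS, hPC⟩ := exists_pc F S hne hsub hnot
    exact h P hPS hPC

theorem pc_transfer (F₁ F₂ : Fan d) (ψ : (Fin d → ℤ) → (Fin d → ℤ))
    (hbij : Set.BijOn ψ F₁.genSet F₂.genSet)
    (hiff : ∀ S : Finset (Fin d → ℤ), S.Nonempty → (↑S : Set (Fin d → ℤ)) ⊆ F₁.genSet →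
      (coneOf (toNR '' (↑S : Set (Fin d → ℤ))) ∈ F₁.cones ↔
        coneOf (toNR '' (ψ '' (↑S : Set (Fin d → ℤ)))) ∈ F₂.cones))
    (P : Finset (Fin d → ℤ)) (hP : ↑P ⊆ F₁.genSet) :
    F₁.IsPrimitiveCollection P ↔ F₂.IsPrimitiveCollection (P.image ψ) := by
  classical
  have himg : (↑(P.image ψ) : Set (Fin d → ℤ)) = ψ '' ↑P := Finset.coe_image
  have hsub₂ : (↑(P.image ψ) : Set (Fin d → ℤ)) ⊆ F₂.genSet := by
    rw [himg]
    exact (Set.image_mono hP).trans hbij.image_eq.subset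
  have hcoe : ∀ x : Fin d → ℤ, (↑(P.erase x) : Set (Fin d → ℤ)) = ↑P \ {x} :=
    fun x => Finset.coe_erase x P
  have hps : ∀ x ∈ P, ψ '' ((↑P : Set (Fin d → ℤ)) \ {x}) = ↑(P.image ψ) \ {ψ x} := by
    intro x hx
    rw [himg, Set.InjOn.image_diff_subset (hbij.injOn.mono hP)
      (by simpa using hx : ({x} : Set (Fin d → ℤ)) ⊆ ↑P), Set.image_singleton]
  have keyP : P.Nonempty →
      (coneOf (toNR '' (↑P : Set (Fin d → ℤ))) ∈ F₁.cones ↔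
        coneOf (toNR '' (↑(P.image ψ) : Set (Fin d → ℤ))) ∈ F₂.cones) := by
    intro hne
    have := hiff P hne hP
    rwa [← himg] at this
  have key : ∀ x ∈ P, (P.erase x).Nonempty →
      (coneOf (toNR '' ((↑P : Set (Fin d → ℤ)) \ {x})) ∈ F₁.cones ↔
        coneOf (toNR '' ((↑(P.image ψ) : Set (Fin d → ℤ)) \ {ψ x})) ∈ F₂.cones) := by
    intro x hx hne'
    have := hiff (P.erase x) hne'
      ((Finset.coe_subset.2 (Finset.erase_subset x P)).trans hP)
    rwa [hcoe x, hps x hx] at this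
  constructor
  · rintro ⟨hne, hsubP, hnot, hdel⟩
    have hcardP : 2 ≤ P.card := pc_card F₁ ⟨hne, hsubP, hnot, hdel⟩
    refine ⟨hne.image ψ, hsub₂, fun h => hnot ((keyP hne).2 h), ?_⟩
    intro q hq
    obtain ⟨x, hx, rfl⟩ := Finset.mem_image.1 hq
    have hne' : (P.erase x).Nonempty := by
      rw [← Finset.card_pos, Finset.card_erase_of_mem hx]
      omega
    exact (key x hx hne').1 (hdel x hx)
  · rintro ⟨hneQ, hsubQ, hnotQ, hdelQ⟩
    have hne : P.Nonempty := by
      obtain ⟨q, hq⟩ := hneQ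
      obtain ⟨x, hx, -⟩ := Finset.mem_image.1 hq
      exact ⟨x, hx⟩
    have hcardQ : 2 ≤ (P.image ψ).card := pc_card F₂ ⟨hneQ, hsubQ, hnotQ, hdelQ⟩
    have hcardP : 2 ≤ P.card := hcardQ.trans (Finset.card_image_le)
    refine ⟨hne, hP, fun h => hnotQ ((keyP hne).1 h), ?_⟩
    intro x hx
    have hne' : (P.erase x).Nonempty := by
      rw [← Finset.card_pos, Finset.card_erase_of_mem hx]
      omega
    exact (key x hx hne').2 (hdelQ (ψ x) (Finset.mem_image_of_mem ψ hx))

end Aux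


/-- Two finite complete simplicial fans are combinatorially equivalent
if and only if their sets of primitive collections are isomorphic. -/
theorem combinatorially_equivalent_iff_pc_isomorphic {d : ℕ} (F₁ F₂ : Fan d)
    (h₁c : F₁.IsComplete) (h₁s : F₁.IsSimplicial)
    (h₂c : F₂.IsComplete) (h₂s : F₂.IsSimplicial) :
    (∃ ψ : (Fin d → ℤ) → (Fin d → ℤ), Set.BijOn ψ F₁.genSet F₂.genSet ∧
        ∀ S : Finset (Fin d → ℤ), S.Nonempty → (↑S : Set (Fin d → ℤ)) ⊆ F₁.genSet →
          (coneOf (toNR '' (↑S : Set (Fin d → ℤ))) ∈ F₁.cones ↔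
            coneOf (toNR '' (ψ '' (↑S : Set (Fin d → ℤ)))) ∈ F₂.cones)) ↔
      (∃ φ : (Fin d → ℤ) → (Fin d → ℤ), Set.BijOn φ F₁.genSet F₂.genSet ∧
        (∀ P : Finset (Fin d → ℤ), F₁.IsPrimitiveCollection P →
          ∃ Q : Finset (Fin d → ℤ), F₂.IsPrimitiveCollection Q ∧
            (↑Q : Set (Fin d → ℤ)) = φ '' (↑P : Set (Fin d → ℤ))) ∧
        (∀ Q : Finset (Fin d → ℤ), F₂.IsPrimitiveCollection Q →
          ∃ P : Finset (Fin d → ℤ), F₁.IsPrimitiveCollection P ∧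
            (↑Q : Set (Fin d → ℤ)) = φ '' (↑P : Set (Fin d → ℤ)))) := by
  classical
  constructor
  · rintro ⟨ψ, hbij, hiff⟩
    refine ⟨ψ, hbij, ?_, ?_⟩
    · intro P hPC
      exact ⟨P.image ψ, (Aux.pc_transfer F₁ F₂ ψ hbij hiff P hPC.2.1).1 hPC,
        Finset.coe_image⟩
    · intro Q hQC
      set P : Finset (Fin d → ℤ) := Q.image (Function.invFunOn ψ F₁.genSet) with hPdef
      have hQg := hQC.2.1
      have hpre : ∀ q ∈ Q, ∃ a ∈ F₁.genSet, ψ a = q := fun q hq => hbij.surjOn (hQg hq)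
      have hPg : ↑P ⊆ F₁.genSet := by
        rw [hPdef, Finset.coe_image]
        rintro _ ⟨q, hq, rfl⟩
        exact Function.invFunOn_mem (hpre q hq)
      have himgQ : P.image ψ = Q := by
        apply Finset.coe_injective
        rw [Finset.coe_image, hPdef, Finset.coe_image, ← Set.image_comp]
        calc (ψ ∘ Function.invFunOn ψ F₁.genSet) '' ↑Q
            = id '' (↑Q : Set (Fin d → ℤ)) :=
              Set.image_congr fun q hq => Function.invFunOn_eq (hpre q hq)
          _ = ↑Q := Set.image_id _
      refine ⟨P, ?_, ?_⟩
      · exact (Aux.pc_transfer F₁ F₂ ψ hbij hiff P hPg).2 (himgQ ▸ hQC)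
      · rw [← himgQ, Finset.coe_image]
  · rintro ⟨φ, hbij, h12, h21⟩
    refine ⟨φ, hbij, ?_⟩
    intro S hne hsub
    have hS2 : (↑(S.image φ) : Set (Fin d → ℤ)) ⊆ F₂.genSet := by
      rw [Finset.coe_image]
      exact (Set.image_mono hsub).trans hbij.image_eq.subset
    have hne2 : (S.image φ).Nonempty := hne.image φ
    rw [Aux.cone_mem_iff F₁ h₁s S hne hsub,
      show φ '' (↑S : Set (Fin d → ℤ)) = ↑(S.image φ) from Finset.coe_image.symm,
      Aux.cone_mem_iff F₂ h₂s _ hne2 hS2]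
    constructor
    · intro h Q hQS hQC
      obtain ⟨P, hPC, hQP⟩ := h21 Q hQC
      have h1 : φ '' (↑P : Set (Fin d → ℤ)) ⊆ φ '' (↑S : Set (Fin d → ℤ)) := by
        rw [← hQP]
        exact (Finset.coe_subset.2 hQS).trans Finset.coe_image.subset
      have hPS : P ⊆ S := Finset.coe_subset.1
        ((hbij.injOn.image_subset_image_iff hPC.2.1 hsub).1 h1)
      exact h P hPS hPC
    · intro h P hPS hPC
      obtain ⟨Q, hQC, hQP⟩ := h12 P hPC
      have hQS : Q ⊆ S.image φ := by
        rw [← Finset.coe_subset, hQP, Finset.coe_image]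
        exact Set.image_mono (Finset.coe_subset.2 hPS)
      exact h Q hQS hQC
end
end

section
/- Let Σ be a finite complete simplicial fan in N, σ ∈ Σ with dim σ ≥ 2, and x a primitive element of N in the relative interior of σ. If P* is a primitive collection of the star subdivision Σ*_{(σ,x)} and x ∈ P*, then G(σ) ∩ P* = ∅. -/
noncomputable section

open Finset

section Aux
variable {d : ℕ}

lemma toNR_injective : Function.Injective (toNR (d := d)) := by
  intro a b h
  funext i
  have := congrFun h i
  simpa [toNR] using this

lemma toNR_eq_zero {a : Fin d → ℤ} : toNR a = 0 ↔ a = 0 := by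
  constructor
  · intro h; funext i; have := congrFun h i; simpa [toNR] using this
  · rintro rfl; funext i; simp [toNR]

lemma toNR_zsmul (g : ℤ) (p : Fin d → ℤ) : toNR (g • p) = (g : ℝ) • toNR p := by
  funext i; simp only [toNR, Pi.smul_apply, smul_eq_mul]; push_cast; ring

lemma mem_coneOf_self {T : Set (NR d)} {v : NR d} (hv : v ∈ T) : v ∈ coneOf T :=
  ⟨1, fun _ => 1, fun _ => v, fun _ => zero_le_one, fun _ => hv, by simp⟩

lemma zero_mem_coneOf (T : Set (NR d)) : (0 : NR d) ∈ coneOf T :=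
  ⟨0, fun _ => 0, fun _ => 0, fun i => le_rfl, fun i => i.elim0, by simp⟩

lemma smul_mem_coneOf {T : Set (NR d)} {w : NR d} {t : ℝ} (ht : 0 ≤ t)
    (hw : w ∈ coneOf T) : t • w ∈ coneOf T := by
  obtain ⟨n, c, v, hc, hv, rfl⟩ := hw
  exact ⟨n, fun i => t * c i, v, fun i => mul_nonneg ht (hc i), hv, by
    rw [Finset.smul_sum]; exact Finset.sum_congr rfl fun i _ => (mul_smul t (c i) (v i)).symm⟩

lemma add_mem_coneOf {T : Set (NR d)} {w₁ w₂ : NR d}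
    (h₁ : w₁ ∈ coneOf T) (h₂ : w₂ ∈ coneOf T) : w₁ + w₂ ∈ coneOf T := by
  obtain ⟨n, c, v, hc, hv, rfl⟩ := h₁
  obtain ⟨m, c', v', hc', hv', rfl⟩ := h₂
  refine ⟨n + m, Fin.append c c', Fin.append v v', ?_, ?_, ?_⟩
  · intro i
    refine Fin.addCases (fun j => ?_) (fun j => ?_) i
    · simpa using hc j
    · simpa using hc' j
  · intro i
    refine Fin.addCases (fun j => ?_) (fun j => ?_) i
    · simpa using hv j
    · simpa using hv' j
  · rw [Fin.sum_univ_add]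
    congr 1
    · exact Finset.sum_congr rfl fun j _ => by simp
    · exact Finset.sum_congr rfl fun j _ => by simp

lemma sum_mem_coneOf {T : Set (NR d)} {ι : Type*} {s : Finset ι} {f : ι → NR d}
    (hf : ∀ i ∈ s, f i ∈ coneOf T) : (∑ i ∈ s, f i) ∈ coneOf T :=
  Finset.sum_induction f (· ∈ coneOf T) (fun _ _ ha hb => add_mem_coneOf ha hb)
    (zero_mem_coneOf T) hf

lemma coneOf_mono {T T' : Set (NR d)} (h : T ⊆ T') : coneOf T ⊆ coneOf T' := by
  rintro w ⟨n, c, v, hc, hv, rfl⟩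
  exact ⟨n, c, v, hc, fun i => h (hv i), rfl⟩

lemma coneOf_subset {T T' : Set (NR d)} (h : T ⊆ coneOf T') : coneOf T ⊆ coneOf T' := by
  rintro w ⟨n, c, v, hc, hv, rfl⟩
  exact sum_mem_coneOf fun i _ => smul_mem_coneOf (hc i) (h (hv i))

lemma mem_coneOf_singleton {v w : NR d} : w ∈ coneOf {v} ↔ ∃ t : ℝ, 0 ≤ t ∧ w = t • v := by
  constructor
  · rintro ⟨n, c, vv, hc, hv, rfl⟩
    refine ⟨∑ i, c i, Finset.sum_nonneg fun i _ => hc i, ?_⟩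
    rw [Finset.sum_smul]
    exact Finset.sum_congr rfl fun i _ => by rw [hv i]
  · rintro ⟨t, ht, rfl⟩
    exact smul_mem_coneOf ht (mem_coneOf_self rfl)

lemma coneOf_singleton_subset {T : Set (NR d)} {v : NR d} (hv : v ∈ coneOf T) :
    coneOf {v} ⊆ coneOf T := by
  intro w hw
  obtain ⟨t, ht, rfl⟩ := mem_coneOf_singleton.1 hw
  exact smul_mem_coneOf ht hv

lemma coneOf_singleton_smul {v : NR d} {t : ℝ} (ht : 0 < t) :
    coneOf {t • v} = coneOf {v} := by
  ext w
  simp only [mem_coneOf_singleton]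
  constructor
  · rintro ⟨s, hs, rfl⟩
    exact ⟨s * t, mul_nonneg hs ht.le, (mul_smul s t v).symm⟩
  · rintro ⟨s, hs, rfl⟩
    exact ⟨s / t, div_nonneg hs ht.le, by rw [smul_smul, div_mul_cancel₀]; exact ht.ne'⟩

lemma mem_coneOf_of_forall {T : Set (NR d)} {w : NR d} {n : ℕ} {c : Fin n → ℝ}
    {v : Fin n → NR d} (hc : ∀ i, 0 ≤ c i) (hv : ∀ i, c i ≠ 0 → v i ∈ T)
    (hw : w = ∑ i, c i • v i) : w ∈ coneOf T := by
  by_cases hex : ∃ i, c i ≠ 0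
  · obtain ⟨i₀, hi₀⟩ := hex
    refine ⟨n, c, fun i => if h : c i ≠ 0 then v i else v i₀, hc, ?_, ?_⟩
    · intro i
      by_cases h : c i ≠ 0
      · simp [h, hv i h]
      · simp [h, hv i₀ hi₀]
    · rw [hw]
      refine Finset.sum_congr rfl fun i _ => ?_
      by_cases h : c i ≠ 0
      · simp [h]
      · push_neg at h
        simp [h]
  · push_neg at hex
    rw [hw]
    refine Finset.sum_induction _ (· ∈ coneOf T) (fun _ _ ha hb => add_mem_coneOf ha hb)
      (zero_mem_coneOf T) fun i _ => by rw [hex i]; simpa using zero_mem_coneOf T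

end Aux

section Aux2
variable {d : ℕ}

lemma primitive_eq_of_smul {a b : Fin d → ℤ} (ha : IsPrimitive a) (hb : IsPrimitive b)
    {t : ℝ} (ht : 0 < t) (h : toNR a = t • toNR b) : a = b := by
  have hcoord : ∀ i, (a i : ℝ) = t * (b i : ℝ) := by
    intro i; simpa [toNR] using congrFun h i
  obtain ⟨j, hj⟩ : ∃ j, b j ≠ 0 := Function.ne_iff.1 hb.1
  have key : ∀ i, b j * a i = a j * b i := by
    intro i
    have : ((b j * a i : ℤ) : ℝ) = ((a j * b i : ℤ) : ℝ) := by
      push_cast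
      rw [hcoord i, hcoord j]; ring
    exact_mod_cast this
  set p := a j with hpdef
  set q := b j with hqdef
  have hq : q ≠ 0 := hj
  have hp : p ≠ 0 := by
    intro h0
    have h1 : (a j : ℝ) = t * (b j : ℝ) := hcoord j
    have h2 : a j = 0 := h0
    rw [h2] at h1
    push_cast at h1
    have hbj : (b j : ℝ) ≠ 0 := Int.cast_ne_zero.2 hj
    exact (mul_ne_zero ht.ne' hbj) h1.symm
  set m : ℤ := (Int.gcd p q : ℤ) with hmdef
  have hm : m ≠ 0 := by
    simp only [hmdef, ne_eq, Int.natCast_eq_zero, Int.gcd_eq_zero_iff]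
    rintro ⟨h1, h2⟩; exact hp h1
  obtain ⟨p', hp'⟩ : m ∣ p := Int.gcd_dvd_left p q
  obtain ⟨q', hq'⟩ : m ∣ q := Int.gcd_dvd_right p q
  have hcop : Int.gcd p' q' = 1 := by
    have hpos : 0 < Int.gcd p q := Int.gcd_pos_of_ne_zero_left q hp
    have h1 : p / m = p' := by rw [hp']; exact Int.mul_ediv_cancel_left p' hm
    have h2 : q / m = q' := by rw [hq']; exact Int.mul_ediv_cancel_left q' hm
    rw [← h1, ← h2, hmdef]
    exact Int.gcd_div_gcd_div_gcd hpos
  have key' : ∀ i, q' * a i = p' * b i := by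
    intro i
    apply mul_left_cancel₀ hm
    have := key i
    rw [hq', hp'] at this
    linarith [this]
  -- q' is a unit
  have hq'unit : q' = 1 ∨ q' = -1 := by
    have hdvd : ∀ i, q' ∣ b i := by
      intro i
      have h1 : q' ∣ p' * b i := ⟨a i, (key' i).symm⟩
      have hco : IsCoprime q' p' := by
        rw [Int.isCoprime_iff_gcd_eq_one, Int.gcd_comm]
        exact hcop
      exact hco.dvd_of_dvd_mul_left h1
    refine hb.2 q' (fun i => b i / q') ?_
    funext i
    exact (Int.mul_ediv_cancel' (hdvd i)).symm
  have hq'sq : q' * q' = 1 := by rcases hq'unit with h | h <;> simp [h]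
  have hab : a = (q' * p') • b := by
    funext i
    have := key' i
    have h2 : q' * (q' * a i) = q' * (p' * b i) := by rw [this]
    calc a i = (q' * q') * a i := by rw [hq'sq]; ring
    _ = (q' * p') * b i := by ring_nf; ring_nf at h2; linarith [h2]
    _ = ((q' * p') • b) i := rfl
  have : q' * p' = 1 ∨ q' * p' = -1 := ha.2 _ _ hab
  rcases this with h1 | h1
  · rw [h1, one_smul] at hab; exact hab
  · exfalso
    rw [h1] at hab
    have hanb : toNR a = -toNR b := by
      rw [hab]; funext i; simp [toNR]
    rw [hanb] at h
    have : (t + 1) • toNR b = 0 := by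
      calc (t + 1) • toNR b = t • toNR b + toNR b := by module
      _ = -toNR b + toNR b := by rw [← h]
      _ = 0 := by abel
    have hb0 : toNR b = 0 := by
      rcases smul_eq_zero.1 this with h' | h'
      · linarith
      · exact h'
    exact hb.1 (toNR_eq_zero.1 hb0)

lemma exists_primitive_smul {s : Fin d → ℤ} (hs : s ≠ 0) :
    ∃ (g : ℤ) (p : Fin d → ℤ), 0 < g ∧ IsPrimitive p ∧ s = g • p := by
  classical
  set m : ℤ := Finset.univ.gcd s with hmdef
  have hm : m ≠ 0 := by
    intro h0
    apply hs
    funext i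
    have := Finset.gcd_eq_zero_iff.1 (hmdef ▸ h0) i (Finset.mem_univ i)
    exact this
  set g : ℤ := |m| with hgdef
  have hg : 0 < g := abs_pos.2 hm
  have hgdvd : ∀ i, g ∣ s i := fun i => (abs_dvd m (s i)).2 (Finset.gcd_dvd (Finset.mem_univ i))
  refine ⟨g, fun i => s i / g, hg, ⟨?_, ?_⟩, ?_⟩
  · intro h0
    apply hs
    funext i
    have := congrFun h0 i
    simp only [Pi.zero_apply] at this ⊢
    have := Int.eq_mul_of_ediv_eq_right (hgdvd i) this
    simpa using this
  · intro k y hky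
    have hsky : s = (g * k) • y := by
      funext i
      have h1 : s i / g = k * y i := congrFun hky i
      have h2 : s i = g * (s i / g) := (Int.mul_ediv_cancel' (hgdvd i)).symm
      calc s i = g * (k * y i) := by rw [h2, h1]
      _ = ((g * k) • y) i := by simp [mul_assoc]
    have hdvdm : (g * k) ∣ m := by
      apply Finset.dvd_gcd
      intro i _
      exact ⟨y i, congrFun hsky i⟩
    have hdvdg : (g * k) ∣ g := hdvdm.trans (dvd_abs m m |>.mpr dvd_rfl |> (hgdef ▸ ·))
    obtain ⟨e, he⟩ := hdvdg
    have : 1 = k * e := by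
      apply mul_left_cancel₀ (a := g) hg.ne'
      rw [mul_one]
      nth_rewrite 1 [he]
      ring
    have : IsUnit k := IsUnit.of_mul_eq_one e this.symm
    exact Int.isUnit_iff.1 this
  · funext i
    exact (Int.mul_ediv_cancel' (hgdvd i)).symm

end Aux2

section Aux3
variable {d : ℕ}

/-- A linear functional nonnegative on a cone and vanishing at a point of the
intrinsic interior vanishes on the whole cone. -/
lemma relint_vanish {σ : Set (NR d)} {u : NR d →ₗ[ℝ] ℝ} (hu : ∀ w ∈ σ, 0 ≤ u w)
    {p : NR d} (hp : p ∈ intrinsicInterior ℝ σ) (hup : u p = 0) : ∀ w ∈ σ, u w = 0 := by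
  intro w hw
  obtain ⟨q, hq, hqp⟩ := hp
  rw [mem_interior_iff_mem_nhds, mem_nhds_subtype] at hq
  obtain ⟨V, hVnhds, hVsub⟩ := hq
  set f : ℝ → NR d := fun t => (q : NR d) + t • ((q : NR d) - w) with hfdef
  have hf : Continuous f := by fun_prop
  have hf0 : f 0 = (q : NR d) := by simp [hfdef]
  have hfV : f ⁻¹' V ∈ nhds (0 : ℝ) := by
    apply hf.continuousAt.preimage_mem_nhds
    rw [hf0]
    exact hVnhds
  obtain ⟨ε, hε, hball⟩ := Metric.mem_nhds_iff.1 hfV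
  set t₀ : ℝ := ε / 2 with ht₀def
  have ht₀ : 0 < t₀ := by positivity
  have ht₀mem : t₀ ∈ Metric.ball (0 : ℝ) ε := by
    rw [Metric.mem_ball, Real.dist_eq, sub_zero, abs_of_pos ht₀, ht₀def]
    linarith
  have hfV' : f t₀ ∈ V := hball ht₀mem
  have hfspan : f t₀ ∈ affineSpan ℝ σ := by
    have h1 : (q : NR d) ∈ affineSpan ℝ σ := q.2
    have h2 : w ∈ affineSpan ℝ σ := subset_affineSpan ℝ σ hw
    have := AffineSubspace.smul_vsub_vadd_mem (affineSpan ℝ σ) t₀ h1 h2 h1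
    simpa [hfdef, vsub_eq_sub, vadd_eq_add, add_comm] using this
  have hfσ : f t₀ ∈ σ := hVsub (show (⟨f t₀, hfspan⟩ : affineSpan ℝ σ) ∈ Subtype.val ⁻¹' V from hfV')
  have h0 : 0 ≤ u (f t₀) := hu _ hfσ
  have huq : u (q : NR d) = 0 := by rw [hqp]; exact hup
  have hcalc : u (f t₀) = -(t₀ * u w) := by
    have h1 : u (f t₀) = u (q : NR d) + t₀ * (u (q : NR d) - u w) := by
      simp [hfdef, map_add, map_smul, map_sub, smul_eq_mul]
    rw [h1, huq]; ring
  rw [hcalc] at h0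
  have hw0 : u w ≤ 0 := by nlinarith
  exact le_antisymm hw0 (hu w hw)

/-- Construct a functional vanishing on `B` and equal to `1` on `A \ B`. -/
lemma exists_functional {A B : Set (Fin d → ℤ)} (hBA : B ⊆ A)
    (hli : LinearIndependent ℝ (fun v : toNR '' A => (v : NR d))) :
    ∃ u : NR d →ₗ[ℝ] ℝ, (∀ a ∈ A, 0 ≤ u (toNR a)) ∧ (∀ b ∈ B, u (toNR b) = 0) ∧
      (∀ a ∈ A, a ∉ B → u (toNR a) = 1) := by
  classical
  have hli' : LinearIndepOn ℝ id (toNR '' A) := hli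
  set b := Module.Basis.extend hli' with hbdef
  set u : NR d →ₗ[ℝ] ℝ :=
    b.constr ℝ (fun i => if (i : NR d) ∈ toNR '' B then 0 else 1) with hudef
  have hval : ∀ a ∈ A, u (toNR a) = if toNR a ∈ toNR '' B then 0 else 1 := by
    intro a ha
    have hmem : toNR a ∈ hli'.extend (Set.subset_univ _) :=
      hli'.subset_extend _ ⟨a, ha, rfl⟩
    have hb : b ⟨toNR a, hmem⟩ = toNR a := by rw [hbdef]; exact Module.Basis.extend_apply_self hli' _
    calc u (toNR a) = u (b ⟨toNR a, hmem⟩) := by rw [hb]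
    _ = if ((⟨toNR a, hmem⟩ : hli'.extend (Set.subset_univ _)) : NR d) ∈ toNR '' B then 0 else 1 := by
        rw [hudef, Module.Basis.constr_basis]
    _ = if toNR a ∈ toNR '' B then 0 else 1 := rfl
  refine ⟨u, ?_, ?_, ?_⟩
  · intro a ha
    rw [hval a ha]
    split <;> norm_num
  · intro w hw
    rw [hval w (hBA hw), if_pos ⟨w, hw, rfl⟩]
  · intro a ha hanB
    rw [hval a ha, if_neg]
    rintro ⟨w, hwB, hweq⟩
    exact hanB (toNR_injective hweq ▸ hwB)

lemma coneOf_nonneg {T : Set (NR d)} {u : NR d →ₗ[ℝ] ℝ} (h : ∀ v ∈ T, 0 ≤ u v) :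
    ∀ w ∈ coneOf T, 0 ≤ u w := by
  rintro w ⟨n, c, v, hc, hv, rfl⟩
  rw [map_sum]
  exact Finset.sum_nonneg fun i _ => by
    rw [map_smul]; exact mul_nonneg (hc i) (h _ (hv i))

/-- A subset of a linearly independent generating set spans a face. -/
lemma isFaceOf_coneOf {A B : Set (Fin d → ℤ)} (hBA : B ⊆ A)
    (hli : LinearIndependent ℝ (fun v : toNR '' A => (v : NR d))) :
    IsFaceOf (coneOf (toNR '' B)) (coneOf (toNR '' A)) := by
  obtain ⟨u, hu0, huB, huA⟩ := exists_functional hBA hli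
  have huTA : ∀ v ∈ toNR '' A, 0 ≤ u v := by rintro v ⟨a, ha, rfl⟩; exact hu0 a ha
  refine ⟨u, coneOf_nonneg huTA, ?_⟩
  ext w
  constructor
  · intro hw
    refine ⟨coneOf_mono (Set.image_mono hBA) hw, ?_⟩
    obtain ⟨n, c, v, hc, hv, rfl⟩ := hw
    rw [map_sum]
    apply Finset.sum_eq_zero
    intro i _
    obtain ⟨bb, hbb, hbeq⟩ := hv i
    rw [map_smul, ← hbeq, huB bb hbb, smul_zero]
  · rintro ⟨hwD, hw0⟩
    obtain ⟨n, c, v, hc, hv, rfl⟩ := hwD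
    rw [map_sum] at hw0
    have hterms : ∀ i ∈ Finset.univ, (0:ℝ) ≤ c i * u (v i) := fun i _ =>
      mul_nonneg (hc i) (huTA _ (hv i))
    have hz : ∀ i ∈ Finset.univ, c i * u (v i) = 0 := by
      apply (Finset.sum_eq_zero_iff_of_nonneg hterms).1
      rw [← hw0]
      exact Finset.sum_congr rfl fun i _ => by rw [map_smul]; rfl
    apply mem_coneOf_of_forall hc (fun i hci => ?_) rfl
    obtain ⟨a, ha, haeq⟩ := hv i
    have hua : u (v i) = 0 := by
      have := hz i (Finset.mem_univ i)
      rcases mul_eq_zero.1 this with h' | h'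
      · exact absurd h' hci
      · exact h'
    by_cases haB : a ∈ B
    · exact ⟨a, haB, haeq⟩
    · exfalso
      rw [← haeq, huA a ha haB] at hua
      norm_num at hua

/-- If the ray of `z` is a face of `coneOf (toNR '' A)`, then some generator is a
positive multiple of `z`. -/
lemma exists_gen_of_ray_face {A : Set (Fin d → ℤ)} {z : Fin d → ℤ} (hz : toNR z ≠ 0)
    (h : IsFaceOf (coneOf {toNR z}) (coneOf (toNR '' A))) :
    ∃ a ∈ A, ∃ t : ℝ, 0 < t ∧ toNR a = t • toNR z := by
  obtain ⟨u, hu, heq⟩ := h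
  have hzmem : toNR z ∈ coneOf {toNR z} := mem_coneOf_self rfl
  rw [heq] at hzmem
  obtain ⟨hzD, hz0⟩ := hzmem
  obtain ⟨n, c, v, hc, hv, hrep⟩ := hzD
  have hterms : ∀ i ∈ Finset.univ, (0:ℝ) ≤ c i * u (v i) := fun i _ =>
    mul_nonneg (hc i) (hu _ (coneOf_mono (by exact Set.Subset.rfl) (mem_coneOf_self (hv i))))
  have hzsum : ∑ i, c i * u (v i) = 0 := by
    rw [← hz0, hrep, map_sum]
    exact Finset.sum_congr rfl fun i _ => by rw [map_smul]; rfl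
  have hz' : ∀ i ∈ Finset.univ, c i * u (v i) = 0 :=
    (Finset.sum_eq_zero_iff_of_nonneg hterms).1 hzsum
  have hex : ∃ i, c i • v i ≠ 0 := by
    by_contra hno
    push_neg at hno
    apply hz
    rw [hrep]
    exact Finset.sum_eq_zero fun i _ => hno i
  obtain ⟨i, hi⟩ := hex
  have hci : c i ≠ 0 := fun h' => hi (by rw [h', zero_smul])
  have hvi : v i ≠ 0 := fun h' => hi (by rw [h', smul_zero])
  have huvi : u (v i) = 0 := by
    rcases mul_eq_zero.1 (hz' i (Finset.mem_univ i)) with h' | h'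
    · exact absurd h' hci
    · exact h'
  have hviface : v i ∈ coneOf {toNR z} := by
    rw [heq]
    exact ⟨mem_coneOf_self (hv i), huvi⟩
  obtain ⟨t, ht, hteq⟩ := mem_coneOf_singleton.1 hviface
  obtain ⟨a, ha, haeq⟩ := hv i
  have ht' : 0 < t := by
    rcases ht.lt_or_eq with h' | h'
    · exact h'
    · exfalso; apply hvi; rw [hteq, ← h', zero_smul]
  exact ⟨a, ha, t, ht', by rw [haeq, hteq]⟩

/-- Primitive version: if the ray of a primitive `z` is a face of a cone generated by
primitive vectors, then `z` is one of the generators. -/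
lemma mem_of_ray_face {A : Set (Fin d → ℤ)} (hA : ∀ a ∈ A, IsPrimitive a)
    {z : Fin d → ℤ} (hz : IsPrimitive z)
    (h : IsFaceOf (coneOf {toNR z}) (coneOf (toNR '' A))) : z ∈ A := by
  have hzne : toNR z ≠ 0 := fun h' => hz.1 (toNR_eq_zero.1 h')
  obtain ⟨a, ha, t, ht, heq⟩ := exists_gen_of_ray_face hzne h
  have := primitive_eq_of_smul (hA a ha) hz ht heq
  rwa [← this]

end Aux3

section Aux4
variable {d : ℕ}

lemma IsFaceOf.subset {τ σ : Set (NR d)} (h : IsFaceOf τ σ) : τ ⊆ σ := by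
  obtain ⟨u, hu, rfl⟩ := h
  exact Set.sep_subset _ _

lemma IsFaceOf.refl (σ : Set (NR d)) : IsFaceOf σ σ :=
  ⟨0, fun x _ => le_rfl, by ext w; simp⟩

lemma Fan.smul_mem (F : Fan d) {ρ : Set (NR d)} (hρ : ρ ∈ F.cones) {w : NR d}
    (hw : w ∈ ρ) {t : ℝ} (ht : 0 ≤ t) : t • w ∈ ρ := by
  obtain ⟨S, hS⟩ := F.rational ρ hρ
  rw [hS] at hw ⊢
  exact smul_mem_coneOf ht hw

lemma Fan.ray_subset (F : Fan d) {ρ : Set (NR d)} (hρ : ρ ∈ F.cones) {z : Fin d → ℤ}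
    (hmem : toNR z ∈ ρ) : coneOf {toNR z} ⊆ ρ := by
  intro w hw
  obtain ⟨t, ht, rfl⟩ := mem_coneOf_singleton.1 hw
  exact F.smul_mem hρ hmem ht

lemma Fan.ray_isFaceOf (F : Fan d) {ρ : Set (NR d)} (hρ : ρ ∈ F.cones) {z : Fin d → ℤ}
    (hray : coneOf {toNR z} ∈ F.cones) (hmem : toNR z ∈ ρ) :
    IsFaceOf (coneOf {toNR z}) ρ := by
  have h := F.inter_face ρ hρ _ hray
  rwa [Set.inter_eq_right.2 (F.ray_subset hρ hmem)] at h

/-- The structure of a cone in a simplicial fan: its primitive generators are linearly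
independent and generate it. -/
lemma Fan.simplicial_structure (F : Fan d) (hs : F.IsSimplicial) {ρ : Set (NR d)}
    (hρ : ρ ∈ F.cones) :
    LinearIndependent ℝ (fun v : toNR '' (F.coneGens ρ) => (v : NR d)) ∧
    ρ = coneOf (toNR '' (F.coneGens ρ)) := by
  classical
  obtain ⟨S, hliS, hρS⟩ := hs ρ hρ
  set A : Set (Fin d → ℤ) := (↑S : Set (Fin d → ℤ)) with hAdef
  have hS0 : ∀ s ∈ A, s ≠ 0 := by
    intro s hsA h0
    have hmem : toNR s ∈ toNR '' A := ⟨s, hsA, rfl⟩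
    have := hliS.ne_zero ⟨toNR s, hmem⟩
    exact this (by simpa [toNR_eq_zero] using h0)
  -- the set of primitivizations of the generators
  set P : Set (Fin d → ℤ) := {p | ∃ s ∈ A, ∃ g : ℤ, 0 < g ∧ IsPrimitive p ∧ s = g • p}
    with hPdef
  -- each primitivization scales to a generator
  have hPtoA : ∀ p ∈ P, ∃ s ∈ A, ∃ t : ℝ, 0 < t ∧ toNR p = t • toNR s ∧
      coneOf {toNR p} = coneOf {toNR s} := by
    rintro p ⟨s, hsA, g, hg, hprim, rfl⟩
    have hgR : (0:ℝ) < (g:ℝ) := by exact_mod_cast hg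
    have hsp : toNR (g • p) = (g:ℝ) • toNR p := toNR_zsmul g p
    refine ⟨g • p, hsA, (g:ℝ)⁻¹, by positivity, ?_, ?_⟩
    · rw [hsp, smul_smul, inv_mul_cancel₀ hgR.ne', one_smul]
    · rw [hsp]; exact (coneOf_singleton_smul hgR).symm
  have hAtoP : ∀ s ∈ A, ∃ p ∈ P, ∃ t : ℝ, 0 < t ∧ toNR s = t • toNR p := by
    intro s hsA
    obtain ⟨g, p, hg, hprim, hseq⟩ := exists_primitive_smul (hS0 s hsA)
    have hgR : (0:ℝ) < (g:ℝ) := by exact_mod_cast hg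
    exact ⟨p, ⟨s, hsA, g, hg, hprim, hseq⟩, (g:ℝ), hgR, by rw [hseq]; exact toNR_zsmul g p⟩
  -- P = coneGens ρ
  have hPeq : F.coneGens ρ = P := by
    apply Set.Subset.antisymm
    · rintro z ⟨⟨hzprim, hzray⟩, hzρ⟩
      have hzne : toNR z ≠ 0 := fun h' => hzprim.1 (toNR_eq_zero.1 h')
      have hface : IsFaceOf (coneOf {toNR z}) ρ := F.ray_isFaceOf hρ hzray hzρ
      rw [hρS] at hface
      obtain ⟨s, hsA, t, ht, hseq⟩ := exists_gen_of_ray_face hzne hface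
      obtain ⟨g, p, hg, hprim, hsgp⟩ := exists_primitive_smul (hS0 s hsA)
      have hgR : (0:ℝ) < (g:ℝ) := by exact_mod_cast hg
      have hpz : toNR p = ((g:ℝ)⁻¹ * t) • toNR z := by
        have h1 : toNR s = (g:ℝ) • toNR p := by rw [hsgp]; exact toNR_zsmul g p
        rw [h1] at hseq
        rw [mul_smul, ← hseq, smul_smul, inv_mul_cancel₀ hgR.ne', one_smul]
      have : p = z := primitive_eq_of_smul hprim hzprim (by positivity) hpz
      exact ⟨s, hsA, g, hg, this ▸ hprim, this ▸ hsgp⟩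
    · rintro p hpP
      obtain ⟨s, hsA, t, ht, hpeq, hconeeq⟩ := hPtoA p hpP
      obtain ⟨s', hs'A, g, hg, hprim, rfl⟩ := hpP
      have hsface : IsFaceOf (coneOf {toNR (g • p)}) ρ := by
        have : IsFaceOf (coneOf (toNR '' {g • p})) (coneOf (toNR '' A)) :=
          isFaceOf_coneOf (Set.singleton_subset_iff.2 hs'A) hliS
        rw [Set.image_singleton] at this
        rwa [← hρS] at this
      have hray : coneOf {toNR p} ∈ F.cones := by
        have h1 : coneOf {toNR (g • p)} ∈ F.cones := F.face_mem ρ hρ _ hsface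
        have h2 : coneOf {toNR (g • p)} = coneOf {toNR p} := by
          rw [toNR_zsmul]
          exact coneOf_singleton_smul (by exact_mod_cast hg)
        rwa [h2] at h1
      have hmemρ : toNR p ∈ ρ := by
        rw [hpeq, hρS]
        exact smul_mem_coneOf ht.le (mem_coneOf_self ⟨s, hsA, rfl⟩)
      exact ⟨⟨hprim, hray⟩, hmemρ⟩
  have hPprim : ∀ p ∈ P, IsPrimitive p := by rintro p ⟨_, _, _, _, hp, _⟩; exact hp
  constructor
  · -- linear independence
    rw [hPeq]
    have hchoice : ∀ q : ↥(toNR '' P), ∃ (r : ↥(toNR '' A)) (t : ℝ), 0 < t ∧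
        (q : NR d) = t • (r : NR d) := by
      rintro ⟨v, hv⟩
      obtain ⟨p, hpP, rfl⟩ := hv
      obtain ⟨s, hsA, t, ht, hpeq, _⟩ := hPtoA p hpP
      exact ⟨⟨toNR s, ⟨s, hsA, rfl⟩⟩, t, ht, hpeq⟩
    choose e t ht hqe using hchoice
    have heinj : Function.Injective e := by
      rintro q₁ q₂ heq
      obtain ⟨p₁, hp₁, hq₁⟩ := q₁.2
      obtain ⟨p₂, hp₂, hq₂⟩ := q₂.2
      have h1 : (q₁ : NR d) = t q₁ • (e q₁ : NR d) := hqe q₁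
      have h2 : (q₂ : NR d) = t q₂ • (e q₂ : NR d) := hqe q₂
      have h3 : (q₁ : NR d) = (t q₁ / t q₂) • (q₂ : NR d) := by
        rw [h1, h2, heq, smul_smul, div_mul_cancel₀]
        exact (ht q₂).ne'
      rw [← hq₁, ← hq₂] at h3
      have hp : p₁ = p₂ := primitive_eq_of_smul (hPprim p₁ hp₁) (hPprim p₂ hp₂)
        (div_pos (ht q₁) (ht q₂)) h3
      apply Subtype.ext
      rw [← hq₁, ← hq₂, hp]
    have h1 : LinearIndependent ℝ (fun q : ↥(toNR '' P) => (e q : NR d)) :=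
      hliS.comp e heinj
    set w : ↥(toNR '' P) → ℝˣ := fun q => Units.mk0 (t q) (ht q).ne' with hwdef
    have h2 := h1.units_smul w
    have hfun : (fun q : ↥(toNR '' P) => (q : NR d)) = w • (fun q => (e q : NR d)) := by
      funext q
      rw [Pi.smul_apply']
      simp only [hwdef, Units.smul_mk0]
      exact hqe q
    rw [hfun]
    exact h2
  · -- generation
    rw [hPeq, hρS]
    apply Set.Subset.antisymm
    · apply coneOf_subset
      rintro v ⟨s, hsA, rfl⟩
      obtain ⟨p, hpP, t, ht, hseq⟩ := hAtoP s hsA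
      rw [hseq]
      exact smul_mem_coneOf ht.le (mem_coneOf_self ⟨p, hpP, rfl⟩)
    · apply coneOf_subset
      rintro v ⟨p, hpP, rfl⟩
      obtain ⟨s, hsA, t, ht, hpeq, _⟩ := hPtoA p hpP
      rw [hpeq]
      exact smul_mem_coneOf ht.le (mem_coneOf_self ⟨s, hsA, rfl⟩)

end Aux4

section Aux5
variable {d : ℕ}

/-- A primitive point in the relative interior of a cone of dimension `≥ 2` does not
span a ray of the fan. -/
lemma Fan.interior_ray_not_mem (F : Fan d) {σ : Set (NR d)} (hσ : σ ∈ F.cones)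
    (hdim : 2 ≤ coneDim σ) {x : Fin d → ℤ} (hx : IsPrimitive x)
    (hxσ : toNR x ∈ intrinsicInterior ℝ σ) : coneOf {toNR x} ∉ F.cones := by
  intro hray
  have hxσ' : toNR x ∈ σ := intrinsicInterior_subset hxσ
  obtain ⟨u, hu, heq⟩ := F.ray_isFaceOf hσ hray hxσ'
  have hux : u (toNR x) = 0 := by
    have : toNR x ∈ coneOf {toNR x} := mem_coneOf_self rfl
    rw [heq] at this
    exact this.2
  have hall := relint_vanish hu hxσ hux
  have hsub : σ ⊆ coneOf {toNR x} := by
    intro w hw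
    rw [heq]
    exact ⟨hw, hall w hw⟩
  have hspan : Submodule.span ℝ σ ≤ Submodule.span ℝ {toNR x} := by
    apply Submodule.span_le.2
    intro w hw
    obtain ⟨t, ht, rfl⟩ := mem_coneOf_singleton.1 (hsub hw)
    exact Submodule.smul_mem _ _ (Submodule.subset_span rfl)
  have hxne : toNR x ≠ 0 := fun h' => hx.1 (toNR_eq_zero.1 h')
  have h1 : Module.finrank ℝ ↥(Submodule.span ℝ ({toNR x} : Set (NR d))) = 1 :=
    finrank_span_singleton hxne
  have h2 : coneDim σ ≤ 1 := by
    rw [coneDim, ← h1]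
    exact Submodule.finrank_mono hspan
  omega

/-- The coefficients of a relative interior point in terms of the generators are
all positive. -/
lemma Fan.relint_coeffs (F : Fan d) (hs : F.IsSimplicial) {σ : Set (NR d)}
    (hσ : σ ∈ F.cones) {x : Fin d → ℤ} (hxσ : toNR x ∈ intrinsicInterior ℝ σ)
    (Gσ : Finset (Fin d → ℤ)) (hGσ : (↑Gσ : Set (Fin d → ℤ)) = F.coneGens σ) :
    ∃ lam : (Fin d → ℤ) → ℝ, (∀ g ∈ Gσ, 0 < lam g) ∧
      toNR x = ∑ g ∈ Gσ, lam g • toNR g := by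
  classical
  obtain ⟨hliσ, hσgen⟩ := F.simplicial_structure hs hσ
  have hxσ' : toNR x ∈ σ := intrinsicInterior_subset hxσ
  have hxmem : toNR x ∈ coneOf (toNR '' (↑Gσ : Set (Fin d → ℤ))) := by
    rw [hGσ, ← hσgen]; exact hxσ'
  obtain ⟨n, c, v, hc, hv, hrep⟩ := hxmem
  choose G hGmem hGeq using hv
  set lam : (Fin d → ℤ) → ℝ := fun g => ∑ i ∈ Finset.univ.filter (fun i => G i = g), c i
    with hlamdef
  have hmain : toNR x = ∑ g ∈ Gσ, lam g • toNR g := by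
    rw [hrep]
    rw [← Finset.sum_fiberwise_of_maps_to (g := G) (t := Gσ)
      (fun i _ => by exact_mod_cast hGmem i) (fun i => c i • v i)]
    refine Finset.sum_congr rfl fun g hg => ?_
    rw [hlamdef, Finset.sum_smul]
    refine Finset.sum_congr rfl fun i hi => ?_
    have hGi : G i = g := (Finset.mem_filter.1 hi).2
    rw [← hGeq i, hGi]
  refine ⟨lam, ?_, hmain⟩
  intro g₀ hg₀
  have hlamnn : ∀ g, 0 ≤ lam g := fun g => Finset.sum_nonneg fun i _ => hc i
  rcases (hlamnn g₀).lt_or_eq with h | h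
  · exact h
  exfalso
  -- build a functional that is 0 on the other generators and 1 on g₀
  obtain ⟨u, hu0, huB, huA⟩ := exists_functional
    (A := F.coneGens σ) (B := F.coneGens σ \ {g₀}) Set.diff_subset hliσ
  have hg₀' : g₀ ∈ F.coneGens σ := by rw [← hGσ]; exact_mod_cast hg₀
  have hug₀ : u (toNR g₀) = 1 := huA g₀ hg₀' (fun h' => h'.2 rfl)
  have huσ : ∀ w ∈ σ, 0 ≤ u w := by
    rw [hσgen]
    exact coneOf_nonneg (by rintro w ⟨a, ha, rfl⟩; exact hu0 a ha)
  have hux : u (toNR x) = 0 := by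
    rw [hmain, map_sum]
    apply Finset.sum_eq_zero
    intro g hg
    rw [map_smul, smul_eq_mul]
    by_cases hgg : g = g₀
    · rw [hgg, ← h]; ring
    · rw [huB g ⟨by rw [← hGσ]; exact_mod_cast hg, hgg⟩, mul_zero]
  have hall := relint_vanish huσ hxσ hux
  have : u (toNR g₀) = 0 := hall _ hg₀'.2
  rw [hug₀] at this
  norm_num at this

/-- Linear independence of the generators of the cones of the star subdivision. -/
lemma Fan.starSub_gens_li (F : Fan d) (hs : F.IsSimplicial) {σ : Set (NR d)}
    (hσ : σ ∈ F.cones) {x : Fin d → ℤ} (hxσ : toNR x ∈ intrinsicInterior ℝ σ)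
    (Gσ : Finset (Fin d → ℤ)) (hGσ : (↑Gσ : Set (Fin d → ℤ)) = F.coneGens σ)
    {τ : Set (NR d)} (hτ : τ ∈ F.cones) (hστ : IsFaceOf σ τ)
    {xi : Fin d → ℤ} (hxi : xi ∈ F.coneGens σ) :
    LinearIndependent ℝ (fun v : toNR ''
      (insert x ((F.coneGens τ \ F.coneGens σ) ∪ (F.coneGens σ \ {xi}))) => (v : NR d)) := by
  classical
  obtain ⟨hliτ, hτgen⟩ := F.simplicial_structure hs hτ
  have hGsGτ : F.coneGens σ ⊆ F.coneGens τ := by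
    rintro z ⟨hz1, hz2⟩
    exact ⟨hz1, hστ.subset hz2⟩
  obtain ⟨lam, hlampos, hlameq⟩ := F.relint_coeffs hs hσ hxσ Gσ hGσ
  have hxiGσ : xi ∈ Gσ := by rw [← Finset.mem_coe, hGσ]; exact hxi
  -- x is not in the span of the other generators of τ
  have hxspan : toNR x ∉ Submodule.span ℝ (toNR '' (F.coneGens τ \ {xi})) := by
    intro hmem
    have hxispan : toNR xi ∈ Submodule.span ℝ (toNR '' (F.coneGens τ \ {xi})) := by
      have hsum : toNR x = (∑ g ∈ Gσ.erase xi, lam g • toNR g) + lam xi • toNR xi := by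
        rw [hlameq, ← Finset.sum_erase_add Gσ _ hxiGσ]
      have hxieq : toNR xi = (lam xi)⁻¹ •
          (toNR x - ∑ g ∈ Gσ.erase xi, lam g • toNR g) := by
        rw [hsum]
        have hlxi : lam xi ≠ 0 := (hlampos xi hxiGσ).ne'
        rw [add_sub_cancel_left, smul_smul, inv_mul_cancel₀ hlxi, one_smul]
      rw [hxieq]
      apply Submodule.smul_mem
      apply Submodule.sub_mem _ hmem
      apply Submodule.sum_mem
      intro g hg
      apply Submodule.smul_mem
      apply Submodule.subset_span
      have hgGσ : g ∈ F.coneGens σ := by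
        rw [← hGσ]; exact_mod_cast (Finset.mem_of_mem_erase hg)
      exact ⟨g, ⟨hGsGτ hgGσ, Finset.ne_of_mem_erase hg⟩, rfl⟩
    -- contradiction with linear independence of the generators of τ
    have hximem : toNR xi ∈ toNR '' F.coneGens τ := ⟨xi, hGsGτ hxi, rfl⟩
    have hnot := hliτ.notMem_span_image
      (s := {q : ↥(toNR '' F.coneGens τ) | (q : NR d) ≠ toNR xi})
      (x := ⟨toNR xi, hximem⟩) (by simp)
    apply hnot
    apply Submodule.span_mono (s := toNR '' (F.coneGens τ \ {xi})) ?_ hxispan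
    rintro v ⟨g, ⟨hgτ, hgxi⟩, rfl⟩
    refine ⟨⟨toNR g, ⟨g, hgτ, rfl⟩⟩, ?_, rfl⟩
    simp only [Set.mem_setOf_eq]
    exact fun h' => hgxi (toNR_injective h')
  -- linear independence of the new generating set
  have hsub1 : toNR '' (F.coneGens τ \ {xi}) ⊆ toNR '' F.coneGens τ :=
    Set.image_mono Set.diff_subset
  have hli1 : LinearIndependent ℝ
      (fun v : toNR '' (F.coneGens τ \ {xi}) => (v : NR d)) := LinearIndepOn.mono (R := ℝ) (v := id) hliτ hsub1
  have hli2 := LinearIndepOn.id_insert (K := ℝ) hli1 hxspan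
  apply hli2.mono
  rw [Set.image_insert_eq]
  apply Set.insert_subset_insert
  apply Set.image_mono
  rintro g (⟨hg1, hg2⟩ | ⟨hg1, hg2⟩)
  · exact ⟨hg1, fun h' => hg2 (h' ▸ hxi)⟩
  · exact ⟨hGsGτ hg1, hg2⟩

end Aux5

section Aux6
variable {d : ℕ}

/-- Any cone of the star subdivision obtained by deleting one element of a primitive
collection containing `x` has its generators among the canonical generators. -/
lemma Fan.star_prim_subset (F F' : Fan d) {σ : Set (NR d)} (hσ : σ ∈ F.cones)
    {x : Fin d → ℤ} (hx : IsPrimitive x) (hxσ : toNR x ∈ intrinsicInterior ℝ σ)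
    (hsub : F'.cones = F.starSub σ x)
    {Pstar : Finset (Fin d → ℤ)} (hP : F'.IsPrimitiveCollection Pstar)
    (hxP : x ∈ Pstar) {z : Fin d → ℤ} (hz : z ∈ Pstar) (hzx : z ≠ x) :
    ∃ τ ∈ F.cones, IsFaceOf σ τ ∧ ∃ xi ∈ F.coneGens σ,
      ((↑Pstar : Set (Fin d → ℤ)) \ {z}) ⊆
        insert x ((F.coneGens τ \ F.coneGens σ) ∪ (F.coneGens σ \ {xi})) := by
  have hC : coneOf (toNR '' ((↑Pstar : Set (Fin d → ℤ)) \ {z})) ∈ F'.cones :=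
    hP.2.2.2 x hxP |> fun _ => hP.2.2.2 z hz
  have hxPz : x ∈ ((↑Pstar : Set (Fin d → ℤ)) \ {z}) :=
    ⟨Finset.mem_coe.2 hxP, fun h => hzx (Set.mem_singleton_iff.1 h).symm⟩
  have hxC : toNR x ∈ coneOf (toNR '' ((↑Pstar : Set (Fin d → ℤ)) \ {z})) :=
    mem_coneOf_self ⟨x, hxPz, rfl⟩
  rw [hsub] at hC
  rcases hC with ⟨hCF, hnface⟩ | ⟨τ, hτ, hστ, xi, hxi, hface⟩
  · exfalso
    obtain ⟨u, hu, heq⟩ := F.inter_face σ hσ _ hCF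
    have hxmem : toNR x ∈ σ ∩ coneOf (toNR '' ((↑Pstar : Set (Fin d → ℤ)) \ {z})) :=
      ⟨intrinsicInterior_subset hxσ, hxC⟩
    rw [heq] at hxmem
    have hall := relint_vanish hu hxσ hxmem.2
    have hinter : σ ∩ coneOf (toNR '' ((↑Pstar : Set (Fin d → ℤ)) \ {z})) = σ := by
      apply Set.Subset.antisymm Set.inter_subset_left
      intro w hw
      rw [heq]
      exact ⟨hw, hall w hw⟩
    apply hnface
    have h2 := F.inter_face _ hCF σ hσ
    rwa [Set.inter_comm, hinter] at h2
  · refine ⟨τ, hτ, hστ, xi, hxi, ?_⟩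
    have hAprim : ∀ a ∈ insert x ((F.coneGens τ \ F.coneGens σ) ∪ (F.coneGens σ \ {xi})),
        IsPrimitive a := by
      rintro a ha
      rcases Set.mem_insert_iff.1 ha with rfl | ha'
      · exact hx
      · rcases ha' with ⟨h1, _⟩ | ⟨h1, _⟩
        · exact h1.1.1
        · exact h1.1.1
    have hD : coneOf (toNR '' (insert x ((F.coneGens τ \ F.coneGens σ) ∪
        (F.coneGens σ \ {xi})))) ∈ F'.cones := by
      rw [hsub]
      right
      exact ⟨τ, hτ, hστ, xi, hxi, IsFaceOf.refl _⟩
    intro w hw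
    have hwgen : w ∈ F'.genSet := hP.2.1 hw.1
    have hwD : toNR w ∈ coneOf (toNR '' (insert x ((F.coneGens τ \ F.coneGens σ) ∪
        (F.coneGens σ \ {xi})))) := hface.subset (mem_coneOf_self ⟨w, hw, rfl⟩)
    exact mem_of_ray_face hAprim hwgen.1 (F'.ray_isFaceOf hD hwgen.2 hwD)

end Aux6

/-- A primitive collection of the star subdivision containing `x` is
disjoint from `G(σ)`. -/
theorem primitiveCollection_of_starSubdivision_disjoint {d : ℕ} (F F' : Fan d)
    (hc : F.IsComplete) (hs : F.IsSimplicial)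
    (σ : Set (NR d)) (hσ : σ ∈ F.cones) (hdim : 2 ≤ coneDim σ)
    (x : Fin d → ℤ) (hx : IsPrimitive x) (hxσ : toNR x ∈ intrinsicInterior ℝ σ)
    (Gσ : Finset (Fin d → ℤ)) (hGσ : (↑Gσ : Set (Fin d → ℤ)) = F.coneGens σ)
    (hsub : F'.IsStarSubdivisionOf F σ x) :
    ∀ Pstar : Finset (Fin d → ℤ), F'.IsPrimitiveCollection Pstar → x ∈ Pstar →
      ∀ y ∈ Gσ, y ∉ Pstar := by
  classical
  intro Pstar hP hxP y hyGσ hyP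
  have hyG : y ∈ F.coneGens σ := by rw [← hGσ]; exact Finset.mem_coe.2 hyGσ
  have hxnotray : coneOf {toNR x} ∉ F.cones := F.interior_ray_not_mem hσ hdim hx hxσ
  have hxnotG : ∀ ρ : Set (NR d), x ∉ F.coneGens ρ := fun ρ h => hxnotray h.1.2
  have hyx : y ≠ x := fun h => hxnotG σ (h ▸ hyG)
  have hsub' : F'.cones = F.starSub σ x := hsub
  have notP : coneOf (toNR '' (↑Pstar : Set (Fin d → ℤ))) ∉ F'.cones := hP.2.2.1
  -- if all of Pstar is contained in a generating set of the star subdivision, we get a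
  -- contradiction
  have contra : ∀ τ ∈ F.cones, IsFaceOf σ τ → ∀ xi ∈ F.coneGens σ,
      ¬ ((↑Pstar : Set (Fin d → ℤ)) ⊆
        insert x ((F.coneGens τ \ F.coneGens σ) ∪ (F.coneGens σ \ {xi}))) := by
    intro τ hτ hστ xi hxi hsubset
    apply notP
    rw [hsub']
    right
    exact ⟨τ, hτ, hστ, xi, hxi,
      isFaceOf_coneOf hsubset (F.starSub_gens_li hs hσ hxσ Gσ hGσ hτ hστ hxi)⟩
  obtain ⟨τ, hτ, hστ, xi, hxi, hPy⟩ :=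
    F.star_prim_subset F' hσ hx hxσ hsub' hP hxP hyP hyx
  by_cases hyxi : y = xi
  · -- Case B : the deleted generator is y itself
    by_cases hGall : ∀ g ∈ Gσ, g ∈ Pstar
    · by_cases hPall : ∀ v ∈ Pstar, v = x ∨ v ∈ Gσ
      · -- Pstar = {x} ∪ Gσ ; then σ itself would be a cone of the star subdivision
        have hPxσ : ((↑Pstar : Set (Fin d → ℤ)) \ {x}) = ↑Gσ := by
          ext v
          constructor
          · rintro ⟨hv, hvx⟩
            rcases hPall v (Finset.mem_coe.1 hv) with h | h
            · exact absurd h hvx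
            · exact Finset.mem_coe.2 h
          · intro hv
            refine ⟨Finset.mem_coe.2 (hGall v (Finset.mem_coe.1 hv)), ?_⟩
            intro h
            apply hxnotG σ
            have : v ∈ F.coneGens σ := by rw [← hGσ]; exact hv
            rwa [Set.mem_singleton_iff.1 h] at this
        have hσgen := (F.simplicial_structure hs hσ).2
        have hσF' : σ ∈ F'.cones := by
          have h1 := hP.2.2.2 x hxP
          rw [hPxσ, hGσ, ← hσgen] at h1
          exact h1
        rw [hsub'] at hσF'
        rcases hσF' with ⟨_, hnface⟩ | ⟨τ₄, hτ₄, hστ₄, xi₄, hxi₄, hfaceσ⟩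
        · exact hnface (IsFaceOf.refl σ)
        · have hA₄prim : ∀ a ∈ insert x ((F.coneGens τ₄ \ F.coneGens σ) ∪
              (F.coneGens σ \ {xi₄})), IsPrimitive a := by
            rintro a ha
            rcases Set.mem_insert_iff.1 ha with rfl | ha'
            · exact hx
            · rcases ha' with ⟨h1, _⟩ | ⟨h1, _⟩
              · exact h1.1.1
              · exact h1.1.1
          have hD₄ : coneOf (toNR '' (insert x ((F.coneGens τ₄ \ F.coneGens σ) ∪
              (F.coneGens σ \ {xi₄})))) ∈ F'.cones := by
            rw [hsub']
            right
            exact ⟨τ₄, hτ₄, hστ₄, xi₄, hxi₄, IsFaceOf.refl _⟩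
          have hxi₄Gσ : xi₄ ∈ Gσ := by rw [← Finset.mem_coe, hGσ]; exact hxi₄
          have hxi₄P : xi₄ ∈ Pstar := hGall xi₄ hxi₄Gσ
          have hgen := hP.2.1 (Finset.mem_coe.2 hxi₄P)
          have hmem : toNR xi₄ ∈ coneOf (toNR '' (insert x ((F.coneGens τ₄ \ F.coneGens σ) ∪
              (F.coneGens σ \ {xi₄})))) := hfaceσ.subset hxi₄.2
          have hxi₄A := mem_of_ray_face hA₄prim hgen.1 (F'.ray_isFaceOf hD₄ hgen.2 hmem)
          rcases Set.mem_insert_iff.1 hxi₄A with h | h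
          · exact hxnotG σ (h ▸ hxi₄)
          · rcases h with ⟨_, h2⟩ | ⟨_, h2⟩
            · exact h2 hxi₄
            · exact h2 rfl
      · -- there is an element of Pstar outside {x} ∪ Gσ
        push_neg at hPall
        obtain ⟨v, hvP, hvx, hvGσ⟩ := hPall
        obtain ⟨τ₃, hτ₃, hστ₃, xi₃, hxi₃, hPv⟩ :=
          F.star_prim_subset F' hσ hx hxσ hsub' hP hxP hvP hvx
        have hxi₃Gσ : xi₃ ∈ Gσ := by rw [← Finset.mem_coe, hGσ]; exact hxi₃
        have hxi₃v : xi₃ ≠ v := fun h => hvGσ (h ▸ hxi₃Gσ)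
        have hxi₃A := hPv ⟨Finset.mem_coe.2 (hGall xi₃ hxi₃Gσ), hxi₃v⟩
        rcases Set.mem_insert_iff.1 hxi₃A with h | h
        · exact hxnotG σ (h ▸ hxi₃)
        · rcases h with ⟨_, h2⟩ | ⟨_, h2⟩
          · exact h2 hxi₃
          · exact h2 rfl
    · -- some generator of σ is not in Pstar : exchange it for y
      push_neg at hGall
      obtain ⟨xk, hxkGσ, hxknP⟩ := hGall
      have hxkG : xk ∈ F.coneGens σ := by rw [← hGσ]; exact Finset.mem_coe.2 hxkGσ
      apply contra τ hτ hστ xk hxkG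
      intro v hvP
      have hvxk : v ≠ xk := fun h => hxknP (h ▸ Finset.mem_coe.1 hvP)
      by_cases hvy : v = y
      · subst hvy
        exact Set.mem_insert_iff.2 (Or.inr (Or.inr ⟨hyG, hvxk⟩))
      · have := hPy ⟨hvP, hvy⟩
        rcases Set.mem_insert_iff.1 this with h | h
        · exact Set.mem_insert_iff.2 (Or.inl h)
        · rcases h with h | ⟨h1, _⟩
          · exact Set.mem_insert_iff.2 (Or.inr (Or.inl h))
          · exact Set.mem_insert_iff.2 (Or.inr (Or.inr ⟨h1, hvxk⟩))
  · -- Case A : y is not the deleted generator, so Pstar is contained in a cone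
    apply contra τ hτ hστ xi hxi
    intro v hvP
    by_cases hvy : v = y
    · subst hvy
      exact Set.mem_insert_iff.2 (Or.inr (Or.inr ⟨hyG, hyxi⟩))
    · exact hPy ⟨hvP, hvy⟩
end
end
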